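/- The strong product Γ[K₂] is a divisible design graph with respect to the partition of its vertex set into the 243 classes {(v,0),(v,1)} (v ∈ V): it is 45-regular, any two distinct vertices in the same class have exactly 44 common neighbours, and any two vertices in different classes have exactly 4 common neighbours. -/

import Mathlib

open SimpleGraph Polynomial Matrix

/-- `V` is the 5-dimensional vector space over `GF(3)`. -/
abbrev V : Type := Fin 5 → ZMod 3

/-- The specific parity-check matrix of the ternary Golay code. -/
def H : Matrix (Fin 5) (Fin 11) (ZMod 3) :=
  !![1,1,1,2,2,0,1,0,0,0,0;
     1,1,2,1,0,2,0,1,0,0,0;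
     1,2,1,0,1,2,0,0,1,0,0;
     1,2,0,1,2,1,0,0,0,1,0;
     1,0,2,2,1,1,0,0,0,0,1]

/-- `S₂ = {±x₁, …, ±x₁₁}` where `x₁, …, x₁₁` are the columns of `H`. -/
def S2 : Set V := {v | ∃ j : Fin 11, v = (fun i => H i j) ∨ v = -(fun i => H i j)}

instance : DecidablePred (· ∈ S2) := fun v =>
  decidable_of_iff (∃ j : Fin 11, v = (fun i => H i j) ∨ v = -(fun i => H i j)) Iff.rfl

/-- The reversal map sending `(a,b,c,d,e)` to `(e,d,c,b,a)`. -/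
def r (v : V) : V := fun i => v i.rev

/-- The Berlekamp–Van Lint–Seidel graph `Γ = Cay(V, S₂)`:
`u` is adjacent to `v` iff `u ≠ v` and `u - v ∈ S₂`. -/
def Γ : SimpleGraph V where
  Adj u v := u ≠ v ∧ u - v ∈ S2
  symm := ⟨by
    rintro u v ⟨hne, j, hj⟩
    refine ⟨hne.symm, j, ?_⟩
    rcases hj with h | h
    · right; rw [← neg_sub, h]
    · left; rw [← neg_sub, h, neg_neg]⟩
  loopless := ⟨fun v h => h.1 rfl⟩

instance : DecidableRel Γ.Adj := fun u v =>
  decidable_of_iff (u ≠ v ∧ u - v ∈ S2) Iff.rfl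

/-- The strong product `Γ[K₂]` of the Berlekamp–Van Lint–Seidel graph with an edge:
`(u,i)` is adjacent to `(v,j)` iff `(u,i) ≠ (v,j)` and (`u = v` or `u` adjacent to `v` in `Γ`). -/
def ΓK2 : SimpleGraph (V × ZMod 2) where
  Adj p q := p ≠ q ∧ (p.1 = q.1 ∨ Γ.Adj p.1 q.1)
  symm := ⟨by
    rintro p q ⟨h1, h2⟩
    exact ⟨h1.symm, h2.imp Eq.symm fun h => h.symm⟩⟩
  loopless := ⟨fun p h => h.1 rfl⟩

instance : DecidableRel ΓK2.Adj := fun p q =>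
  decidable_of_iff (p ≠ q ∧ (p.1 = q.1 ∨ Γ.Adj p.1 q.1)) Iff.rfl


section Aux

set_option maxRecDepth 40000

/-- The codes of the 22 vectors of `S2` under base-3 encoding. -/
def S2F : Finset ℕ := {121, 76, 178, 194, 146, 132, 1, 3, 9, 27, 81, 242, 44, 104, 142, 208, 228, 2, 6, 18, 54, 162}

/-- Base-3 digitwise subtraction on codes. -/
def nsub (n m : ℕ) : ℕ :=
  (n % 3 + 2 * (m % 3)) % 3
  + 3 * ((n / 3 % 3 + 2 * (m / 3 % 3)) % 3)
  + 9 * ((n / 9 % 3 + 2 * (m / 9 % 3)) % 3)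
  + 27 * ((n / 27 % 3 + 2 * (m / 27 % 3)) % 3)
  + 81 * ((n / 81 % 3 + 2 * (m / 81 % 3)) % 3)

def idx (v : V) : ℕ := (v 0).val + 3*(v 1).val + 9*(v 2).val + 27*(v 3).val + 81*(v 4).val

def dec (n : ℕ) : V := fun i => ((n / 3 ^ (i : ℕ)) % 3 : ℕ)

lemma card_S2F : S2F.card = 22 := by decide

set_option maxHeartbeats 8000000 in
lemma lam_nat : ∀ n ∈ S2F, (S2F.filter (fun s => nsub n s ∈ S2F)).card = 1 := by decide

set_option maxHeartbeats 24000000 in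
lemma mu_nat : ∀ n : Fin 243, (n : ℕ) ∉ S2F → (n : ℕ) ≠ 0 →
    (S2F.filter (fun s => nsub (n:ℕ) s ∈ S2F)).card = 2 := by decide

set_option maxHeartbeats 8000000 in
lemma dec_idx : ∀ v : V, dec (idx v) = v := by decide

set_option maxHeartbeats 8000000 in
lemma idx_lt : ∀ v : V, idx v < 243 := by decide

lemma idx_dec_S2F : ∀ n ∈ S2F, idx (dec n) = n := by decide

set_option maxHeartbeats 8000000 in
lemma idx_digits : ∀ v : V, idx v % 3 = (v 0).val ∧ idx v / 3 % 3 = (v 1).val ∧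
    idx v / 9 % 3 = (v 2).val ∧ idx v / 27 % 3 = (v 3).val ∧ idx v / 81 % 3 = (v 4).val := by
  decide

lemma zmod_sub_val : ∀ a b : ZMod 3, (a - b).val = (a.val + 2 * b.val) % 3 := by decide

lemma idx_sub (u w : V) : idx (u - w) = nsub (idx u) (idx w) := by
  obtain ⟨h0,h1,h2,h3,h4⟩ := idx_digits u
  obtain ⟨g0,g1,g2,g3,g4⟩ := idx_digits w
  simp only [nsub, h0,h1,h2,h3,h4,g0,g1,g2,g3,g4]
  simp only [idx, Pi.sub_apply, zmod_sub_val]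

lemma idx_inj {u w : V} (h : idx u = idx w) : u = w := by
  rw [← dec_idx u, ← dec_idx w, h]

set_option maxHeartbeats 16000000 in
lemma memS2_iff : ∀ v : V, v ∈ S2 ↔ idx v ∈ S2F := by decide

lemma zero_not_mem_S2 : (0 : V) ∉ S2 := by decide

lemma S2_neg {s : V} (h : s ∈ S2) : -s ∈ S2 := by
  obtain ⟨j, h | h⟩ := h
  · exact ⟨j, Or.inr (by rw [h])⟩
  · exact ⟨j, Or.inl (by rw [h, neg_neg])⟩

lemma adj_iff {u w : V} : Γ.Adj u w ↔ u - w ∈ S2 := by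
  refine ⟨fun h => h.2, fun h => ⟨fun he => ?_, h⟩⟩
  rw [he, sub_self] at h
  exact zero_not_mem_S2 h

lemma gamma_degree (u : V) : Γ.degree u = 22 := by
  rw [← card_S2F, SimpleGraph.degree]
  refine Finset.card_bij' (fun w _ => idx (u - w)) (fun n _ => u - dec n) ?_ ?_ ?_ ?_
  · intro w hw
    rw [SimpleGraph.mem_neighborFinset] at hw
    exact (memS2_iff _).1 (adj_iff.1 hw)
  · intro n hn
    rw [SimpleGraph.mem_neighborFinset, adj_iff, sub_sub_cancel]
    exact (memS2_iff _).2 (by rw [idx_dec_S2F n hn]; exact hn)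
  · intro w _
    rw [dec_idx, sub_sub_cancel]
  · intro n hn
    rw [sub_sub_cancel]
    exact idx_dec_S2F n hn

/-- Common neighbours of `u` and `v` in `Γ`, as a `Finset`. -/
def ccG (u v : V) : Finset V := Finset.univ.filter (fun w => Γ.Adj u w ∧ Γ.Adj v w)

lemma ccG_card (u v : V) :
    (ccG u v).card = (S2F.filter (fun s => nsub (idx (u - v)) s ∈ S2F)).card := by
  refine Finset.card_bij' (fun w _ => idx (u - w)) (fun n _ => u - dec n) ?_ ?_ ?_ ?_
  · intro w hw
    rw [ccG, Finset.mem_filter] at hw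
    obtain ⟨-, h1, h2⟩ := hw
    rw [Finset.mem_filter]
    refine ⟨(memS2_iff _).1 (adj_iff.1 h1), ?_⟩
    rw [← idx_sub]
    have : (u - v) - (u - w) = -(v - w) := by ring
    rw [this]
    exact (memS2_iff _).1 (S2_neg (adj_iff.1 h2))
  · intro n hn
    rw [Finset.mem_filter] at hn
    obtain ⟨hn1, hn2⟩ := hn
    rw [ccG, Finset.mem_filter]
    refine ⟨Finset.mem_univ _, ?_, ?_⟩
    · rw [adj_iff, sub_sub_cancel]
      exact (memS2_iff _).2 (by rw [idx_dec_S2F n hn1]; exact hn1)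
    · rw [adj_iff]
      have : v - (u - dec n) = -((u - v) - dec n) := by ring
      rw [this]
      refine S2_neg ((memS2_iff _).2 ?_)
      rw [idx_sub, idx_dec_S2F n hn1]
      exact hn2
  · intro w _
    rw [dec_idx, sub_sub_cancel]
  · intro n hn
    rw [Finset.mem_filter] at hn
    rw [sub_sub_cancel]
    exact idx_dec_S2F n hn.1

lemma gamma_lambda {u v : V} (h : Γ.Adj u v) : (ccG u v).card = 1 := by
  rw [ccG_card]
  exact lam_nat _ ((memS2_iff _).1 (adj_iff.1 h))

lemma gamma_mu {u v : V} (hne : u ≠ v) (h : ¬ Γ.Adj u v) : (ccG u v).card = 2 := by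
  rw [ccG_card]
  have h1 : idx (u - v) ∉ S2F := fun hm => h (adj_iff.2 ((memS2_iff _).2 hm))
  have h2 : idx (u - v) ≠ 0 := by
    intro h0
    have : idx (u - v) = idx 0 := by
      rw [h0]; rfl
    exact hne (sub_eq_zero.1 (idx_inj this))
  exact mu_nat ⟨idx (u - v), idx_lt _⟩ h1 h2

lemma zmod2_ne_iff : ∀ a b : ZMod 2, a ≠ b ↔ a = b + 1 := by decide
lemma zmod2_three : ∀ i j k : ZMod 2, i ≠ j → i = k ∨ j = k := by decide
lemma zmod2_self : ∀ a : ZMod 2, a ≠ a + 1 := by decide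

lemma k2_adj_mk {u v : V} {i j : ZMod 2} :
    ΓK2.Adj (u, i) (v, j) ↔ (u, i) ≠ (v, j) ∧ (u = v ∨ Γ.Adj u v) := Iff.rfl

lemma k2_nbhd (u : V) (i : ZMod 2) :
    ΓK2.neighborFinset (u, i) = (Γ.neighborFinset u ×ˢ Finset.univ) ∪ {(u, i + 1)} := by
  ext ⟨v, j⟩
  rw [SimpleGraph.mem_neighborFinset, Finset.mem_union, Finset.mem_product,
    Finset.mem_singleton]
  constructor
  · rintro ⟨hne, h | h⟩
    · have h' : u = v := h
      subst h'
      right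
      have hj : j ≠ i := fun e => hne (by rw [e])
      rw [Prod.mk.injEq]
      exact ⟨rfl, (zmod2_ne_iff j i).1 hj⟩
    · exact Or.inl ⟨(SimpleGraph.mem_neighborFinset _ _ _).mpr h, Finset.mem_univ j⟩
  · rintro (⟨hv, -⟩ | he)
    · rw [SimpleGraph.mem_neighborFinset] at hv
      exact ⟨fun he => hv.ne (congrArg Prod.fst he), Or.inr hv⟩
    · rw [Prod.mk.injEq] at he
      obtain ⟨rfl, rfl⟩ := he
      exact ⟨fun he => zmod2_self i (congrArg Prod.snd he), Or.inl rfl⟩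

lemma k2_regular : ΓK2.IsRegularOfDegree 45 := by
  rintro ⟨u, i⟩
  rw [SimpleGraph.degree, k2_nbhd, Finset.card_union_of_disjoint, Finset.card_product,
    Finset.card_singleton]
  · have hd : (Γ.neighborFinset u).card = 22 := gamma_degree u
    rw [hd]
    rfl
  · rw [Finset.disjoint_singleton_right, Finset.mem_product, SimpleGraph.mem_neighborFinset]
    rintro ⟨h, -⟩
    exact Γ.irrefl h

lemma mem_common_k2_same {v w : V} {i j k : ZMod 2} (hij : i ≠ j) :
    (w, k) ∈ ΓK2.commonNeighbors (v, i) (v, j) ↔ Γ.Adj v w := by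
  rw [SimpleGraph.mem_commonNeighbors, k2_adj_mk, k2_adj_mk]
  constructor
  · rintro ⟨⟨hne1, h1 | h1⟩, ⟨hne2, -⟩⟩
    · exfalso
      subst h1
      rcases zmod2_three i j k hij with h | h
      · exact hne1 (by rw [h])
      · exact hne2 (by rw [h])
    · exact h1
  · intro h
    have hvw : v ≠ w := h.ne
    exact ⟨⟨fun he => hvw (congrArg Prod.fst he), Or.inr h⟩,
           ⟨fun he => hvw (congrArg Prod.fst he), Or.inr h⟩⟩

lemma part2 (v : V) (i j : ZMod 2) (hij : i ≠ j) :
    Fintype.card (ΓK2.commonNeighbors (v, i) (v, j)) = 44 := by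
  rw [← Set.toFinset_card]
  have hset : (ΓK2.commonNeighbors (v, i) (v, j)).toFinset
      = Γ.neighborFinset v ×ˢ (Finset.univ : Finset (ZMod 2)) := by
    ext ⟨w, k⟩
    rw [Set.mem_toFinset, mem_common_k2_same hij, Finset.mem_product,
      SimpleGraph.mem_neighborFinset]
    simp
  have hd : (Γ.neighborFinset v).card = 22 := gamma_degree v
  rw [hset, Finset.card_product, hd]
  decide

lemma mem_common_k2_diff {u v w : V} {i j k : ZMod 2} (huv : u ≠ v) :
    (w, k) ∈ ΓK2.commonNeighbors (u, i) (v, j) ↔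
      (Γ.Adj u w ∧ Γ.Adj v w) ∨
        (Γ.Adj u v ∧ ((w = u ∧ k = i + 1) ∨ (w = v ∧ k = j + 1))) := by
  rw [SimpleGraph.mem_commonNeighbors, k2_adj_mk, k2_adj_mk]
  constructor
  · rintro ⟨⟨hne1, h1 | h1⟩, ⟨hne2, h2 | h2⟩⟩
    · exact absurd (h1.trans h2.symm) huv
    · right
      refine ⟨by rw [h1]; exact h2.symm, Or.inl ⟨h1.symm, ?_⟩⟩
      have hki : k ≠ i := fun hk => hne1 (by rw [h1, hk])
      exact (zmod2_ne_iff k i).1 hki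
    · right
      refine ⟨by rw [h2]; exact h1, Or.inr ⟨h2.symm, ?_⟩⟩
      have hkj : k ≠ j := fun hk => hne2 (by rw [h2, hk])
      exact (zmod2_ne_iff k j).1 hkj
    · left; exact ⟨h1, h2⟩
  · rintro (⟨h1, h2⟩ | ⟨hadj, ⟨rfl, rfl⟩ | ⟨rfl, rfl⟩⟩)
    · exact ⟨⟨fun he => h1.ne (congrArg Prod.fst he), Or.inr h1⟩,
             ⟨fun he => h2.ne (congrArg Prod.fst he), Or.inr h2⟩⟩
    · exact ⟨⟨fun he => zmod2_self i (congrArg Prod.snd he), Or.inl rfl⟩,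
             ⟨fun he => huv (congrArg Prod.fst he).symm, Or.inr hadj.symm⟩⟩
    · exact ⟨⟨fun he => huv (congrArg Prod.fst he), Or.inr hadj⟩,
             ⟨fun he => zmod2_self j (congrArg Prod.snd he), Or.inl rfl⟩⟩

lemma part3 (u v : V) (i j : ZMod 2) (huv : u ≠ v) :
    Fintype.card (ΓK2.commonNeighbors (u, i) (v, j)) = 4 := by
  rw [← Set.toFinset_card]
  by_cases hadj : Γ.Adj u v
  · have hset : (ΓK2.commonNeighbors (u, i) (v, j)).toFinset
        = (ccG u v ×ˢ (Finset.univ : Finset (ZMod 2)))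
          ∪ {(u, i + 1), (v, j + 1)} := by
      ext ⟨w, k⟩
      rw [Set.mem_toFinset, mem_common_k2_diff huv]
      simp only [Finset.mem_union, Finset.mem_product, Finset.mem_univ, and_true,
        Finset.mem_insert, Finset.mem_singleton, Prod.mk.injEq, ccG, Finset.mem_filter]
      constructor
      · rintro (⟨h1, h2⟩ | ⟨-, ⟨rfl, rfl⟩ | ⟨rfl, rfl⟩⟩)
        · exact Or.inl ⟨trivial, h1, h2⟩
        · exact Or.inr (Or.inl ⟨rfl, rfl⟩)
        · exact Or.inr (Or.inr ⟨rfl, rfl⟩)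
      · rintro (⟨-, h1, h2⟩ | ⟨rfl, rfl⟩ | ⟨rfl, rfl⟩)
        · exact Or.inl ⟨h1, h2⟩
        · exact Or.inr ⟨hadj, Or.inl ⟨rfl, rfl⟩⟩
        · exact Or.inr ⟨hadj, Or.inr ⟨rfl, rfl⟩⟩
    rw [hset, Finset.card_union_of_disjoint, Finset.card_product, gamma_lambda hadj]
    · rw [Finset.card_insert_of_notMem, Finset.card_singleton]
      · rfl
      · rw [Finset.mem_singleton]
        intro he
        rw [Prod.mk.injEq] at he
        exact huv he.1
    · rw [Finset.disjoint_left]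
      rintro ⟨w, k⟩ hw hmem
      rw [Finset.mem_product, ccG, Finset.mem_filter] at hw
      simp only [Finset.mem_insert, Finset.mem_singleton, Prod.mk.injEq] at hmem
      rcases hmem with ⟨rfl, -⟩ | ⟨rfl, -⟩
      · exact Γ.irrefl hw.1.2.1
      · exact Γ.irrefl hw.1.2.2
  · have hset : (ΓK2.commonNeighbors (u, i) (v, j)).toFinset
        = ccG u v ×ˢ (Finset.univ : Finset (ZMod 2)) := by
      ext ⟨w, k⟩
      rw [Set.mem_toFinset, mem_common_k2_diff huv]
      simp only [Finset.mem_product, Finset.mem_univ, and_true, ccG, Finset.mem_filter]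
      constructor
      · rintro (⟨h1, h2⟩ | ⟨h, -⟩)
        · exact ⟨trivial, h1, h2⟩
        · exact absurd h hadj
      · rintro ⟨-, h1, h2⟩
        exact Or.inl ⟨h1, h2⟩
    rw [hset, Finset.card_product, gamma_mu huv hadj]
    rfl

end Aux

/-- `Γ[K₂]` is a divisible design graph with respect to the partition into the 243 classes
`{(v,0), (v,1)}`: it is 45-regular, two distinct vertices in the same class have exactly 44
common neighbours, and two vertices in different classes have exactly 4 common neighbours. -/


theorem strong_product_is_divisible_design :
    ΓK2.IsRegularOfDegree 45 ∧
    (∀ (v : V) (i j : ZMod 2), i ≠ j →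
      Fintype.card (ΓK2.commonNeighbors (v, i) (v, j)) = 44) ∧
    (∀ (u v : V) (i j : ZMod 2), u ≠ v →
      Fintype.card (ΓK2.commonNeighbors (u, i) (v, j)) = 4) :=
  ⟨k2_regular, fun v i j hij => part2 v i j hij, fun u v i j huv => part3 u v i j huv⟩
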